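/- Let {Λ_ω}_{ω∈Ω} be an integral K-operator frame for B(H) with best bounds A, B, let Q : H → H be a bounded invertible operator with Q^{-1} commuting with K*, and let C, D be the best frame bounds of the integral K-operator frame {Λ_ω Q}_{ω∈Ω}. Then A‖Q^{-1}‖^{-2} ≤ C ≤ A‖Q‖² and B‖Q^{-1}‖^{-2} ≤ D ≤ B‖Q‖². -/

import Mathlib

open MeasureTheory ContinuousLinearMap

theorem stmt_8 {H : Type*} [NormedAddCommGroup H] [InnerProductSpace ℂ H] [CompleteSpace H]
    {Ω : Type*} [MeasurableSpace Ω] (μ : Measure Ω)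
    (Λ : Ω → H →L[ℂ] H) (K : H →L[ℂ] H) (A B C D : ℝ)
    (hA : 0 < A) (hB : 0 < B) (hC : 0 < C) (hD : 0 < D)
    (Q : H ≃L[ℂ] H)
    (hcomm : (Q.symm : H →L[ℂ] H) ∘L adjoint K = adjoint K ∘L (Q.symm : H →L[ℂ] H))
    -- A, B are the best bounds of the integral K-operator frame {Λ_ω}
    (hlow : ∀ x : H, A * ‖adjoint K x‖ ^ 2 ≤ ∫ ω, ‖Λ ω x‖ ^ 2 ∂μ)
    (hupp : ∀ x : H, ∫ ω, ‖Λ ω x‖ ^ 2 ∂μ ≤ B * ‖x‖ ^ 2)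
    (hAbest : ∀ A' : ℝ, (∀ x : H, A' * ‖adjoint K x‖ ^ 2 ≤ ∫ ω, ‖Λ ω x‖ ^ 2 ∂μ) → A' ≤ A)
    (hBbest : ∀ B' : ℝ, (∀ x : H, ∫ ω, ‖Λ ω x‖ ^ 2 ∂μ ≤ B' * ‖x‖ ^ 2) → B ≤ B')
    -- C, D are the best bounds of the integral K-operator frame {Λ_ω Q}
    (hlowQ : ∀ x : H, C * ‖adjoint K x‖ ^ 2 ≤ ∫ ω, ‖(Λ ω ∘L (Q : H →L[ℂ] H)) x‖ ^ 2 ∂μ)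
    (huppQ : ∀ x : H, ∫ ω, ‖(Λ ω ∘L (Q : H →L[ℂ] H)) x‖ ^ 2 ∂μ ≤ D * ‖x‖ ^ 2)
    (hCbest : ∀ C' : ℝ,
      (∀ x : H, C' * ‖adjoint K x‖ ^ 2 ≤ ∫ ω, ‖(Λ ω ∘L (Q : H →L[ℂ] H)) x‖ ^ 2 ∂μ) → C' ≤ C)
    (hDbest : ∀ D' : ℝ,
      (∀ x : H, ∫ ω, ‖(Λ ω ∘L (Q : H →L[ℂ] H)) x‖ ^ 2 ∂μ ≤ D' * ‖x‖ ^ 2) → D ≤ D') :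
    (A / ‖(Q.symm : H →L[ℂ] H)‖ ^ 2 ≤ C ∧ C ≤ A * ‖(Q : H →L[ℂ] H)‖ ^ 2) ∧
      (B / ‖(Q.symm : H →L[ℂ] H)‖ ^ 2 ≤ D ∧ D ≤ B * ‖(Q : H →L[ℂ] H)‖ ^ 2) := by

  by_cases htriv : Subsingleton H
  · exfalso
    have h := hCbest (C + 1) (fun x => by
      simp [Subsingleton.elim x (0 : H)])
    linarith
  · have hnt : Nontrivial H := not_subsingleton_iff_nontrivial.mp htriv
    set Qc := (Q : H →L[ℂ] H) with hQc
    set Qi := (Q.symm : H →L[ℂ] H) with hQi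
    have hQcne : Qc ≠ 0 := by
      intro h
      obtain ⟨x, hx⟩ := exists_ne (0 : H)
      apply hx
      have h0 : Q x = 0 := by
        have := congrFun (congrArg DFunLike.coe h) x
        simpa [hQc] using this
      simpa using congrArg Q.symm h0
    have hQine : Qi ≠ 0 := by
      intro h
      obtain ⟨x, hx⟩ := exists_ne (0 : H)
      apply hx
      have h0 : Q.symm x = 0 := by
        have := congrFun (congrArg DFunLike.coe h) x
        simpa [hQi] using this
      simpa using congrArg Q h0
    have hQcpos : 0 < ‖Qc‖ := norm_pos_iff.mpr hQcne
    have hQipos : 0 < ‖Qi‖ := norm_pos_iff.mpr hQine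
    -- pointwise commutation facts
    have hc1 : ∀ x : H, Qi (adjoint K x) = adjoint K (Qi x) := fun x =>
      congrFun (congrArg DFunLike.coe hcomm) x
    have hc2 : ∀ x : H, adjoint K (Q x) = Q (adjoint K x) := by
      intro x
      have := hc1 (Q x)
      have h2 : Qi (Q x) = x := by simp [hQi]
      rw [h2] at this
      simpa [hQi] using congrArg Q this
    -- C ≥ A / ‖Qi‖²
    have hCl : A / ‖Qi‖ ^ 2 ≤ C := by
      apply hCbest
      intro x
      have h1 : A * ‖adjoint K (Q x)‖ ^ 2 ≤ ∫ ω, ‖(Λ ω ∘L Qc) x‖ ^ 2 ∂μ := by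
        simpa [hQc] using hlow (Q x)
      have h2 : ‖adjoint K x‖ ≤ ‖Qi‖ * ‖adjoint K (Q x)‖ := by
        have : adjoint K x = Qi (adjoint K (Q x)) := by
          rw [hc2]; simp [hQi]
        rw [this]; exact Qi.le_opNorm _
      have h3 : ‖adjoint K x‖ ^ 2 ≤ ‖Qi‖ ^ 2 * ‖adjoint K (Q x)‖ ^ 2 := by
        calc ‖adjoint K x‖ ^ 2 ≤ (‖Qi‖ * ‖adjoint K (Q x)‖) ^ 2 := by
              apply pow_le_pow_left₀ (norm_nonneg _) h2
          _ = ‖Qi‖ ^ 2 * ‖adjoint K (Q x)‖ ^ 2 := by ring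
      calc A / ‖Qi‖ ^ 2 * ‖adjoint K x‖ ^ 2
          ≤ A / ‖Qi‖ ^ 2 * (‖Qi‖ ^ 2 * ‖adjoint K (Q x)‖ ^ 2) := by
            apply mul_le_mul_of_nonneg_left h3 (by positivity)
        _ = A * ‖adjoint K (Q x)‖ ^ 2 := by field_simp
        _ ≤ _ := h1
    -- C ≤ A * ‖Qc‖²
    have hCu : C ≤ A * ‖Qc‖ ^ 2 := by
      have key : C / ‖Qc‖ ^ 2 ≤ A := by
        apply hAbest
        intro x
        have h1 : C * ‖adjoint K (Q.symm x)‖ ^ 2 ≤ ∫ ω, ‖Λ ω x‖ ^ 2 ∂μ := by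
          have := hlowQ (Q.symm x)
          simpa [hQc] using this
        have h2 : ‖adjoint K x‖ ≤ ‖Qc‖ * ‖adjoint K (Q.symm x)‖ := by
          have : adjoint K x = Q (adjoint K (Q.symm x)) := by
            rw [← hc2]; simp
          rw [this]; exact Qc.le_opNorm _
        have h3 : ‖adjoint K x‖ ^ 2 ≤ ‖Qc‖ ^ 2 * ‖adjoint K (Q.symm x)‖ ^ 2 := by
          calc ‖adjoint K x‖ ^ 2 ≤ (‖Qc‖ * ‖adjoint K (Q.symm x)‖) ^ 2 := by
                apply pow_le_pow_left₀ (norm_nonneg _) h2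
            _ = _ := by ring
        calc C / ‖Qc‖ ^ 2 * ‖adjoint K x‖ ^ 2
            ≤ C / ‖Qc‖ ^ 2 * (‖Qc‖ ^ 2 * ‖adjoint K (Q.symm x)‖ ^ 2) := by
              apply mul_le_mul_of_nonneg_left h3 (by positivity)
          _ = C * ‖adjoint K (Q.symm x)‖ ^ 2 := by field_simp
          _ ≤ _ := h1
      rwa [div_le_iff₀ (by positivity)] at key
    -- D ≤ B * ‖Qc‖²
    have hDu : D ≤ B * ‖Qc‖ ^ 2 := by
      apply hDbest
      intro x
      have h1 : ∫ ω, ‖(Λ ω ∘L Qc) x‖ ^ 2 ∂μ ≤ B * ‖Q x‖ ^ 2 := by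
        simpa [hQc] using hupp (Q x)
      have h2 : ‖Q x‖ ^ 2 ≤ ‖Qc‖ ^ 2 * ‖x‖ ^ 2 := by
        calc ‖Q x‖ ^ 2 ≤ (‖Qc‖ * ‖x‖) ^ 2 := by
              apply pow_le_pow_left₀ (norm_nonneg _) (Qc.le_opNorm x)
          _ = _ := by ring
      calc ∫ ω, ‖(Λ ω ∘L Qc) x‖ ^ 2 ∂μ ≤ B * ‖Q x‖ ^ 2 := h1
        _ ≤ B * (‖Qc‖ ^ 2 * ‖x‖ ^ 2) := by
            apply mul_le_mul_of_nonneg_left h2 hB.le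
        _ = B * ‖Qc‖ ^ 2 * ‖x‖ ^ 2 := by ring
    -- B / ‖Qi‖² ≤ D
    have hDl : B / ‖Qi‖ ^ 2 ≤ D := by
      have key : B ≤ D * ‖Qi‖ ^ 2 := by
        apply hBbest
        intro x
        have h1 : ∫ ω, ‖Λ ω x‖ ^ 2 ∂μ ≤ D * ‖Q.symm x‖ ^ 2 := by
          have := huppQ (Q.symm x)
          simpa [hQc] using this
        have h2 : ‖Q.symm x‖ ^ 2 ≤ ‖Qi‖ ^ 2 * ‖x‖ ^ 2 := by
          calc ‖Q.symm x‖ ^ 2 ≤ (‖Qi‖ * ‖x‖) ^ 2 := by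
                apply pow_le_pow_left₀ (norm_nonneg _) (Qi.le_opNorm x)
            _ = _ := by ring
        calc ∫ ω, ‖Λ ω x‖ ^ 2 ∂μ ≤ D * ‖Q.symm x‖ ^ 2 := h1
          _ ≤ D * (‖Qi‖ ^ 2 * ‖x‖ ^ 2) := by
              apply mul_le_mul_of_nonneg_left h2 hD.le
          _ = D * ‖Qi‖ ^ 2 * ‖x‖ ^ 2 := by ring
      rw [div_le_iff₀ (by positivity)]
      linarith
    exact ⟨⟨hCl, hCu⟩, ⟨hDl, hDu⟩⟩
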